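/- Let K(s) be a cumulant generating function that is twice continuously differentiable near 0 with K(0)=0, K'(0)=μ, K''(0)=σ² > 0, and suppose K is three times differentiable at 0. Then as γ → μ, the saddlepoint ŝ(γ) defined by K'(ŝ) = γ satisfies ŝ(γ) = (γ-μ)/σ² + o(γ-μ), and ŵ(γ) = sgn(ŝ)·√(2(ŝγ - K(ŝ))) satisfies ŵ(γ) = (γ-μ)/σ + o(γ-μ). -/

import Mathlib

open Filter Asymptotics

private lemma sqrt_add_le_aux (x y : ℝ) (hx : 0 ≤ x) (hy : 0 ≤ y) :
    Real.sqrt (x + y) ≤ Real.sqrt x + Real.sqrt y := by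
  have h1 := Real.sq_sqrt hx; have h2 := Real.sq_sqrt hy
  have h3 := Real.sqrt_nonneg x; have h4 := Real.sqrt_nonneg y
  calc Real.sqrt (x + y) ≤ Real.sqrt ((Real.sqrt x + Real.sqrt y) ^ 2) :=
        Real.sqrt_le_sqrt (by nlinarith)
    _ = Real.sqrt x + Real.sqrt y := Real.sqrt_sq (by positivity)

private lemma abs_sqrt_sub_sqrt_le (a b : ℝ) (hb : 0 ≤ b) :
    |Real.sqrt a - Real.sqrt b| ≤ Real.sqrt |a - b| := by
  rcases le_total a b with h | h
  · rw [abs_sub_comm a b, abs_of_nonneg (sub_nonneg.2 h),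
      abs_of_nonpos (sub_nonpos.2 (Real.sqrt_le_sqrt h)), neg_sub]
    rcases le_or_gt a 0 with ha | ha
    · rw [Real.sqrt_eq_zero'.2 ha, sub_zero]
      exact Real.sqrt_le_sqrt (by linarith)
    · have h2 := sqrt_add_le_aux (b - a) a (by linarith) ha.le
      rw [show b - a + a = b by ring] at h2
      linarith
  · rw [abs_of_nonneg (sub_nonneg.2 h),
      abs_of_nonneg (sub_nonneg.2 (Real.sqrt_le_sqrt h))]
    have h2 := sqrt_add_le_aux (a - b) b (by linarith) hb
    rw [show a - b + b = a by ring] at h2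
    linarith

private lemma sign_mul_abs' (x : ℝ) : Real.sign x * |x| = x := by
  rcases lt_trichotomy x 0 with h | h | h
  · rw [Real.sign_of_neg h, abs_of_neg h]; ring
  · simp [h]
  · rw [Real.sign_of_pos h, abs_of_pos h]; ring

private lemma abs_sign_le (x : ℝ) : |Real.sign x| ≤ 1 := by
  rcases Real.sign_apply_eq x with h | h | h <;> rw [h] <;> norm_num

/-- Local behavior of the saddlepoint and the Lugannani–Rice argument near the mean:
if `K` is a CGF, twice continuously differentiable near `0`, with `K(0)=0`, `K'(0)=μ`,
`K''(0)=σ² > 0`, and three times differentiable at `0`, and `ŝ(γ)` is the saddlepoint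
branch with `K'(ŝ(γ)) = γ` and `ŝ(γ) → 0` as `γ → μ`, then
`ŝ(γ) = (γ-μ)/σ² + o(γ-μ)` and `ŵ(γ) = sgn(ŝ)·√(2(ŝγ - K(ŝ))) = (γ-μ)/σ + o(γ-μ)`. -/
theorem stmt_17 (K : ℝ → ℝ) (μ σ : ℝ) (hσ : 0 < σ)
    (hsmooth : ∃ U ∈ nhds (0 : ℝ), ContDiffOn ℝ 2 K U)
    (hK0 : K 0 = 0) (hK1 : deriv K 0 = μ) (hK2 : deriv (deriv K) 0 = σ^2)
    (hK3 : DifferentiableAt ℝ (iteratedDeriv 2 K) 0)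
    (shat : ℝ → ℝ)
    (hsaddle : ∀ᶠ γ in nhds μ, deriv K (shat γ) = γ)
    (hshat0 : Tendsto shat (nhds μ) (nhds 0)) :
    (fun γ => shat γ - (γ - μ)/σ^2) =o[nhds μ] (fun γ => γ - μ) ∧
    (fun γ => Real.sign (shat γ) * Real.sqrt (2 * (shat γ * γ - K (shat γ)))
        - (γ - μ)/σ) =o[nhds μ] (fun γ => γ - μ) := by
  obtain ⟨U, hU, hKU⟩ := hsmooth
  have hσ2 : (0:ℝ) < σ^2 := by positivity
  set V : Set ℝ := interior U with hVdef
  have hVopen : IsOpen V := isOpen_interior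
  have h0V : (0:ℝ) ∈ V := mem_interior_iff_mem_nhds.2 hU
  have hVnhds : V ∈ nhds (0:ℝ) := hVopen.mem_nhds h0V
  have hKV : ContDiffOn ℝ 2 K V := hKU.mono interior_subset
  have hf' : ContDiffOn ℝ 1 (deriv K) V :=
    hKV.deriv_of_isOpen hVopen (by norm_num)
  have hfd : ∀ x ∈ V, DifferentiableAt ℝ (deriv K) x := fun x hx =>
    ((hf'.differentiableOn (by norm_num)).differentiableAt (hVopen.mem_nhds hx))
  have hKd : ∀ x ∈ V, DifferentiableAt ℝ K x := fun x hx =>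
    ((hKV.differentiableOn (by norm_num)).differentiableAt (hVopen.mem_nhds hx))
  -- first-order expansion of deriv K at 0
  have hder : HasDerivAt (deriv K) (σ^2) 0 := by
    rw [← hK2]; exact (hfd 0 h0V).hasDerivAt
  have hT1 : (fun s => deriv K s - μ - σ^2 * s) =o[nhds 0] (fun s => s) := by
    have h := hasDerivAt_iff_isLittleO.1 hder
    simp only [sub_zero, smul_eq_mul, hK1] at h
    exact h.congr_left (fun s => by ring)
  -- second order Taylor expansion of K at 0
  have hT2 : (fun s => K s - μ * s - σ^2 * s^2 / 2) =o[nhds 0] (fun s => s^2) := by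
    rw [isLittleO_iff]
    intro ε hε
    have h1 := (isLittleO_iff.1 hT1) hε
    have h2 : {s : ℝ | ‖deriv K s - μ - σ^2 * s‖ ≤ ε * ‖s‖} ∩ V ∈ nhds (0:ℝ) :=
      Filter.inter_mem h1 hVnhds
    obtain ⟨r, hr, hball⟩ := Metric.mem_nhds_iff.1 h2
    have hkey : ∀ s : ℝ, |s| < r → ‖K s - μ * s - σ^2 * s^2 / 2‖ ≤ ε * ‖s^2‖ := by
      intro s hs
      set g : ℝ → ℝ := fun t => K t - μ * t - σ^2 * t^2 / 2 with hg
      have hsub : Metric.closedBall (0:ℝ) |s| ⊆ Metric.ball (0:ℝ) r := by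
        intro t ht
        simp only [Metric.mem_closedBall, Metric.mem_ball, Real.dist_eq, sub_zero] at *
        exact lt_of_le_of_lt ht hs
      have hgd : ∀ t ∈ Metric.closedBall (0:ℝ) |s|,
          HasDerivWithinAt g (deriv K t - μ - σ^2 * t) (Metric.closedBall (0:ℝ) |s|) t := by
        intro t ht
        have htV : t ∈ V := (hball (hsub ht)).2
        have : HasDerivAt g (deriv K t - μ - σ^2 * t) t := by
          have hK' : HasDerivAt K (deriv K t) t := (hKd t htV).hasDerivAt
          have h2' : HasDerivAt (fun t : ℝ => μ * t) μ t := by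
            simpa using (hasDerivAt_id t).const_mul μ
          have h3' : HasDerivAt (fun t : ℝ => σ^2 * t^2 / 2) (σ^2 * t) t := by
            have := ((hasDerivAt_pow 2 t).const_mul (σ^2)).div_const 2
            simpa using this.congr_deriv (by ring)
          exact (hK'.sub h2').sub h3'
        exact this.hasDerivWithinAt
      have hbound : ∀ t ∈ Metric.closedBall (0:ℝ) |s|,
          ‖deriv K t - μ - σ^2 * t‖ ≤ ε * |s| := by
        intro t ht
        have h1' : ‖deriv K t - μ - σ^2 * t‖ ≤ ε * ‖t‖ := (hball (hsub ht)).1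
        have : ‖t‖ ≤ |s| := by
          simpa [Real.norm_eq_abs, Real.dist_eq] using ht
        calc ‖deriv K t - μ - σ^2 * t‖ ≤ ε * ‖t‖ := h1'
          _ ≤ ε * |s| := by exact mul_le_mul_of_nonneg_left this hε.le
      have hmem0 : (0:ℝ) ∈ Metric.closedBall (0:ℝ) |s| := by simp [abs_nonneg]
      have hmems : s ∈ Metric.closedBall (0:ℝ) |s| := by
        simp [Real.dist_eq]
      have := (convex_closedBall (0:ℝ) |s|).norm_image_sub_le_of_norm_hasDerivWithin_le
        hgd hbound hmem0 hmems
      have hg0 : g 0 = 0 := by simp [hg, hK0]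
      simp only [hg0, sub_zero] at this
      calc ‖g s‖ ≤ ε * |s| * ‖s‖ := this
        _ = ε * ‖s^2‖ := by
          rw [Real.norm_eq_abs, Real.norm_eq_abs, pow_two, abs_mul]; ring
    filter_upwards [Metric.ball_mem_nhds (0:ℝ) hr] with s hs
    exact hkey s (by simpa [Real.dist_eq] using hs)
  -- transfer along shat
  have hVev : ∀ᶠ γ in nhds μ, shat γ ∈ V := hshat0.eventually_mem hVnhds
  have e1 : (fun γ => γ - μ - σ^2 * shat γ) =o[nhds μ] (fun γ => shat γ) := by
    have := hT1.comp_tendsto hshat0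
    refine this.congr' ?_ (Eventually.of_forall fun _ => rfl)
    filter_upwards [hsaddle] with γ hγ
    simp [Function.comp, hγ]
  -- shat = O(γ - μ)
  have hOs : (fun γ => shat γ) =O[nhds μ] (fun γ => γ - μ) := by
    rw [isBigO_iff]
    refine ⟨2/σ^2, ?_⟩
    filter_upwards [(isLittleO_iff.1 e1) (half_pos hσ2)] with γ hγ
    simp only [Real.norm_eq_abs] at hγ ⊢
    have h1 : |σ^2 * shat γ| - |γ - μ| ≤ |γ - μ - σ^2 * shat γ| := by
      have := abs_sub_abs_le_abs_sub (σ^2 * shat γ) (γ - μ)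
      calc |σ^2 * shat γ| - |γ - μ| ≤ |σ^2 * shat γ - (γ - μ)| := this
        _ = |γ - μ - σ^2 * shat γ| := by rw [abs_sub_comm]
    have h2 : |σ^2 * shat γ| = σ^2 * |shat γ| := by
      rw [abs_mul, abs_of_pos hσ2]
    have h3 : σ^2 * |shat γ| ≤ |γ - μ| + σ^2/2 * |shat γ| := by
      rw [← h2]; linarith
    have : σ^2/2 * |shat γ| ≤ |γ - μ| := by linarith
    calc |shat γ| = (2/σ^2) * (σ^2/2 * |shat γ|) := by
          rw [show (2/σ^2) * (σ^2/2 * |shat γ|) = (σ^2/σ^2) * |shat γ| by ring,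
            div_self (ne_of_gt hσ2), one_mul]
      _ ≤ (2/σ^2) * |γ - μ| := by
        apply mul_le_mul_of_nonneg_left this; positivity
  -- part 1
  have e1' : (fun γ => γ - μ - σ^2 * shat γ) =o[nhds μ] (fun γ => γ - μ) :=
    e1.trans_isBigO hOs
  have part1 : (fun γ => shat γ - (γ - μ)/σ^2) =o[nhds μ] (fun γ => γ - μ) := by
    have heq : (fun γ => shat γ - (γ - μ)/σ^2)
        = fun γ => -(1/σ^2) * (γ - μ - σ^2 * shat γ) := by
      funext γ; field_simp; ring
    rw [heq]
    exact e1'.const_mul_left _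
  refine ⟨part1, ?_⟩
  -- D := shat γ * γ - K (shat γ) - σ²(shat γ)²/2 = o((shat γ)²)
  have e2 : (fun γ => K (shat γ) - μ * shat γ - σ^2 * (shat γ)^2 / 2)
      =o[nhds μ] (fun γ => (shat γ)^2) := hT2.comp_tendsto hshat0
  have e3 : (fun γ => shat γ * (γ - μ - σ^2 * shat γ))
      =o[nhds μ] (fun γ => (shat γ)^2) := by
    have := (isBigO_refl (fun γ => shat γ) (nhds μ)).mul_isLittleO e1
    exact this.congr_right (fun γ => by ring)
  have eD : (fun γ => shat γ * γ - K (shat γ) - σ^2 * (shat γ)^2 / 2)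
      =o[nhds μ] (fun γ => (shat γ)^2) := by
    have := e3.sub e2
    exact this.congr_left (fun γ => by ring)
  -- ŵ - σ·ŝ = o(ŝ)
  have eW : (fun γ => Real.sign (shat γ) * Real.sqrt (2 * (shat γ * γ - K (shat γ)))
      - σ * shat γ) =o[nhds μ] (fun γ => shat γ) := by
    rw [isLittleO_iff]
    intro ε hε
    have hε2 : (0:ℝ) < ε^2/2 := by positivity
    filter_upwards [(isLittleO_iff.1 eD) hε2] with γ hγ
    set s := shat γ with hs
    set D := s * γ - K s - σ^2 * s^2 / 2 with hD
    have hX : 2 * (s * γ - K s) = σ^2 * s^2 + 2 * D := by rw [hD]; ring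
    have hDbound : |D| ≤ ε^2/2 * s^2 := by
      have := hγ
      rw [Real.norm_eq_abs, Real.norm_eq_abs] at this
      simpa [← hD, sq_abs] using this
    have hssq : Real.sqrt (σ^2 * s^2) = σ * |s| := by
      rw [show σ^2 * s^2 = (σ * |s|)^2 by rw [mul_pow, sq_abs]]
      exact Real.sqrt_sq (by positivity)
    have key : |Real.sqrt (2 * (s * γ - K s)) - σ * (abs s)| ≤ ε * (abs s) := by
      rw [← hssq]
      calc |Real.sqrt (2 * (s * γ - K s)) - Real.sqrt (σ^2 * s^2)|
          ≤ Real.sqrt |2 * (s * γ - K s) - σ^2 * s^2| :=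
            abs_sqrt_sub_sqrt_le _ _ (by positivity)
        _ = Real.sqrt |2 * D| := by rw [hX]; ring_nf
        _ ≤ Real.sqrt (ε^2 * s^2) := by
            apply Real.sqrt_le_sqrt
            rw [abs_mul, abs_two]
            nlinarith [hDbound]
        _ = ε * |s| := by
            rw [show ε^2 * s^2 = (ε * |s|)^2 by rw [mul_pow, sq_abs]]
            exact Real.sqrt_sq (by positivity)
    have hsgn : σ * s = Real.sign s * (σ * |s|) := by
      rw [show Real.sign s * (σ * |s|) = σ * (Real.sign s * |s|) by ring,
        sign_mul_abs' s]
    rw [Real.norm_eq_abs, Real.norm_eq_abs]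
    calc |Real.sign s * Real.sqrt (2 * (s * γ - K s)) - σ * s|
        = |Real.sign s| * |Real.sqrt (2 * (s * γ - K s)) - σ * (abs s)| := by
          rw [hsgn, ← mul_sub, abs_mul]
      _ ≤ 1 * (ε * |s|) := by
          apply mul_le_mul (abs_sign_le s) key (abs_nonneg _) zero_le_one
      _ = ε * |s| := by ring
  -- conclude part 2
  have eW' : (fun γ => Real.sign (shat γ) * Real.sqrt (2 * (shat γ * γ - K (shat γ)))
      - σ * shat γ) =o[nhds μ] (fun γ => γ - μ) := eW.trans_isBigO hOs
  have part1' : (fun γ => σ * (shat γ - (γ - μ)/σ^2)) =o[nhds μ] (fun γ => γ - μ) :=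
    part1.const_mul_left σ
  have := eW'.add part1'
  refine this.congr_left (fun γ => ?_)
  field_simp
  ring
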